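/- Let Z be a compact totally disconnected metric space and let a group Γ act on Z by homeomorphisms. Then the Γ-invariant finite Borel measures on Z correspond bijectively to positive ℤ-linear homomorphisms from the coinvariants C(Z, ℤ)_Γ to ℝ, where C(Z, ℤ)_Γ is the quotient of C(Z, ℤ) by the subgroup generated by elements f − γ·f, and positivity means nonnegativity on the images of nonnegative functions. -/

import Mathlib

open MeasureTheory Set TopologicalSpace
open scoped Classical NNReal ENNReal
set_option linter.unusedSectionVars false

/-- The subgroup of `C(Z, ℤ)` generated by the elements `f - γ·f`,
where `(γ·f)(z) = f(γ⁻¹ • z)`. -/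
def coinvariantsSubgroup (Γ Z : Type*) [Group Γ] [TopologicalSpace Z] [MulAction Γ Z]
    [ContinuousConstSMul Γ Z] : AddSubgroup C(Z, ℤ) :=
  AddSubgroup.closure
    {g | ∃ (f : C(Z, ℤ)) (γ : Γ),
      g = f - f.comp ⟨fun z => γ⁻¹ • z, continuous_const_smul γ⁻¹⟩}

namespace Stmt1Aux

section Top
variable {Z : Type*} [TopologicalSpace Z]

noncomputable def indCM (U : Set Z) (hU : IsClopen U) : C(Z, ℤ) :=
  ⟨fun z => if z ∈ U then 1 else 0, by
    have h1 : Continuous (U.boolIndicator) := (continuous_boolIndicator_iff_isClopen U).2 hU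
    have h2 : Continuous (fun b : Bool => if b then (1:ℤ) else 0) :=
      continuous_of_discreteTopology
    have : (fun z => if z ∈ U then (1:ℤ) else 0)
        = (fun b : Bool => if b then (1:ℤ) else 0) ∘ U.boolIndicator := by
      funext z; by_cases h : z ∈ U <;> simp [Set.boolIndicator, h]
    rw [this]; exact h2.comp h1⟩

@[simp] lemma indCM_apply (U : Set Z) (hU : IsClopen U) (z : Z) :
    indCM U hU z = if z ∈ U then 1 else 0 := rfl

lemma indCM_nonneg (U : Set Z) (hU : IsClopen U) (z : Z) : 0 ≤ indCM U hU z := by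
  simp only [indCM_apply]; split <;> simp

variable (ψ : C(Z, ℤ) →+ ℝ)

lemma psi_mono (hψ : ∀ f : C(Z, ℤ), (∀ z, 0 ≤ f z) → 0 ≤ ψ f) {f g : C(Z, ℤ)}
    (h : ∀ z, f z ≤ g z) : ψ f ≤ ψ g := by
  have := hψ (g - f) (fun z => by simpa using h z)
  rw [map_sub] at this; linarith

lemma psi_ind_nonneg (hψ : ∀ f : C(Z, ℤ), (∀ z, 0 ≤ f z) → 0 ≤ ψ f)
    (U : Set Z) (hU : IsClopen U) : 0 ≤ ψ (indCM U hU) :=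
  hψ _ (indCM_nonneg U hU)

lemma psi_ind_mono (hψ : ∀ f : C(Z, ℤ), (∀ z, 0 ≤ f z) → 0 ≤ ψ f)
    {U V : Set Z} (hU : IsClopen U) (hV : IsClopen V) (hUV : U ⊆ V) :
    ψ (indCM U hU) ≤ ψ (indCM V hV) := by
  refine psi_mono ψ hψ fun z => ?_
  by_cases h : z ∈ U
  · simp [h, hUV h]
  · simp only [indCM_apply, h, if_false]
    split <;> simp

lemma psi_ind_add (U W : Set Z) (hU : IsClopen U) (hW : IsClopen W) :
    ψ (indCM (U ∩ W) (hU.inter hW)) + ψ (indCM (U \ W) (hU.diff hW)) = ψ (indCM U hU) := by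
  rw [← map_add]
  congr 1
  ext z
  by_cases h1 : z ∈ U <;> by_cases h2 : z ∈ W <;>
    simp [indCM_apply, h1, h2]

lemma psi_ind_union_le (hψ : ∀ f : C(Z, ℤ), (∀ z, 0 ≤ f z) → 0 ≤ ψ f)
    (U V : Set Z) (hU : IsClopen U) (hV : IsClopen V) :
    ψ (indCM (U ∪ V) (hU.union hV)) ≤ ψ (indCM U hU) + ψ (indCM V hV) := by
  rw [← map_add]
  refine psi_mono ψ hψ fun z => ?_
  by_cases h1 : z ∈ U <;> by_cases h2 : z ∈ V <;>
    simp [indCM_apply, h1, h2]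

lemma finite_range [CompactSpace Z] (f : C(Z, ℤ)) : (Set.range f).Finite :=
  (isCompact_range f.continuous).finite ⟨inferInstance⟩

lemma fiber_clopen (f : C(Z, ℤ)) (n : ℤ) : IsClopen (f ⁻¹' {n}) :=
  (isClopen_discrete {n}).preimage f.continuous

lemma hom_ext [CompactSpace Z] (ψ₁ ψ₂ : C(Z, ℤ) →+ ℝ)
    (h : ∀ (U : Set Z) (hU : IsClopen U), ψ₁ (indCM U hU) = ψ₂ (indCM U hU)) : ψ₁ = ψ₂ := by
  ext f
  have hfin := finite_range f
  have hdec : f = ∑ n ∈ hfin.toFinset, n • indCM (f ⁻¹' {n}) (fiber_clopen f n) := by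
    ext z
    rw [ContinuousMap.coe_sum]
    simp only [Finset.sum_apply, ContinuousMap.coe_smul, Pi.smul_apply, indCM_apply,
      Set.mem_preimage, Set.mem_singleton_iff, smul_eq_mul]
    rw [Finset.sum_congr rfl (fun n _ => by rw [mul_ite, mul_one, mul_zero])]
    rw [Finset.sum_ite_eq hfin.toFinset (f z) (fun n => n)]
    simp [Set.Finite.mem_toFinset]
  rw [hdec, map_sum, map_sum]
  exact Finset.sum_congr rfl fun n _ => by rw [map_zsmul, map_zsmul, h]

lemma exists_clopen_sep [CompactSpace Z] [T2Space Z] [TotallyDisconnectedSpace Z]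
    {K₁ K₂ : Set Z} (h₁ : IsCompact K₁) (h₂ : IsClosed K₂) (hd : Disjoint K₁ K₂) :
    ∃ W : Set Z, IsClopen W ∧ K₁ ⊆ W ∧ Disjoint W K₂ := by
  have hcov : K₁ ⊆ ⋃ i : {V : Set Z // IsClopen V ∧ V ⊆ K₂ᶜ}, i.1 := by
    intro x hx
    have hxc : x ∈ K₂ᶜ := (disjoint_left.1 hd) hx
    obtain ⟨V, hV, hxV, hVsub⟩ := compact_exists_isClopen_in_isOpen h₂.isOpen_compl hxc
    exact Set.mem_iUnion.2 ⟨⟨V, hV, hVsub⟩, hxV⟩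
  obtain ⟨t, ht⟩ := h₁.elim_finite_subcover (fun i : {V : Set Z // IsClopen V ∧ V ⊆ K₂ᶜ} => i.1)
    (fun i => i.2.1.2) hcov
  refine ⟨⋃ i ∈ t, i.1, isClopen_biUnion_finset (fun i _ => i.2.1), ht, ?_⟩
  rw [Set.disjoint_left]
  rintro x hx hx2
  obtain ⟨i, _, hxi⟩ := Set.mem_iUnion₂.1 hx
  exact i.2.2 hxi hx2

/-- The candidate values of the content of `K`. -/
def contSet (K : Set Z) : Set ℝ≥0 :=
  {r : ℝ≥0 | ∃ (U : Set Z) (hU : IsClopen U), K ⊆ U ∧ r = (ψ (indCM U hU)).toNNReal}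

lemma contSet_nonempty (K : Set Z) : (contSet ψ K).Nonempty :=
  ⟨(ψ (indCM univ isClopen_univ)).toNNReal, univ, isClopen_univ, subset_univ K, rfl⟩

variable [CompactSpace Z] [T2Space Z] [TotallyDisconnectedSpace Z]

/-- The content associated to a positive linear functional on `C(Z, ℤ)`. -/
noncomputable def rContent (hψ : ∀ f : C(Z, ℤ), (∀ z, 0 ≤ f z) → 0 ≤ ψ f) : Content Z where
  toFun K := sInf (contSet ψ K)
  mono' K₁ K₂ h := csInf_le_csInf (OrderBot.bddBelow _) (contSet_nonempty ψ K₂)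
    (fun r ⟨U, hU, hKU, hr⟩ => ⟨U, hU, h.trans hKU, hr⟩)
  sup_le' K₁ K₂ := by
    refine le_of_forall_pos_le_add fun ε hε => ?_
    obtain ⟨a, ⟨U₁, hU₁, hK₁, rfl⟩, ha⟩ :=
      exists_lt_of_csInf_lt (contSet_nonempty ψ K₁)
        (lt_add_of_pos_right _ (half_pos hε))
    obtain ⟨b, ⟨U₂, hU₂, hK₂, rfl⟩, hb⟩ :=
      exists_lt_of_csInf_lt (contSet_nonempty ψ K₂)
        (lt_add_of_pos_right _ (half_pos hε))
    have hle : sInf (contSet ψ ↑(K₁ ⊔ K₂)) ≤ (ψ (indCM (U₁ ∪ U₂) (hU₁.union hU₂))).toNNReal :=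
      csInf_le (OrderBot.bddBelow _) ⟨U₁ ∪ U₂, hU₁.union hU₂, union_subset_union hK₁ hK₂, rfl⟩
    refine hle.trans ?_
    have h1 : (ψ (indCM (U₁ ∪ U₂) (hU₁.union hU₂))).toNNReal
        ≤ (ψ (indCM U₁ hU₁)).toNNReal + (ψ (indCM U₂ hU₂)).toNNReal := by
      rw [← Real.toNNReal_add (psi_ind_nonneg ψ hψ U₁ hU₁) (psi_ind_nonneg ψ hψ U₂ hU₂)]
      exact Real.toNNReal_mono (psi_ind_union_le ψ hψ U₁ U₂ hU₁ hU₂)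
    refine h1.trans ?_
    calc (ψ (indCM U₁ hU₁)).toNNReal + (ψ (indCM U₂ hU₂)).toNNReal
        ≤ (sInf (contSet ψ K₁) + ε/2) + (sInf (contSet ψ K₂) + ε/2) :=
          add_le_add ha.le hb.le
      _ = sInf (contSet ψ K₁) + sInf (contSet ψ K₂) + ε := by rw [add_add_add_comm, add_halves]
  sup_disjoint' K₁ K₂ hd _ _ := by
    refine le_antisymm ?_ ?_
    · -- ≤ : as in sup_le'
      refine le_of_forall_pos_le_add fun ε hε => ?_
      obtain ⟨a, ⟨U₁, hU₁, hK₁, rfl⟩, ha⟩ :=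
        exists_lt_of_csInf_lt (contSet_nonempty ψ K₁)
          (lt_add_of_pos_right _ (half_pos hε))
      obtain ⟨b, ⟨U₂, hU₂, hK₂, rfl⟩, hb⟩ :=
        exists_lt_of_csInf_lt (contSet_nonempty ψ K₂)
          (lt_add_of_pos_right _ (half_pos hε))
      have hle : sInf (contSet ψ ↑(K₁ ⊔ K₂)) ≤ (ψ (indCM (U₁ ∪ U₂) (hU₁.union hU₂))).toNNReal :=
        csInf_le (OrderBot.bddBelow _) ⟨U₁ ∪ U₂, hU₁.union hU₂, union_subset_union hK₁ hK₂, rfl⟩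
      refine hle.trans ?_
      have h1 : (ψ (indCM (U₁ ∪ U₂) (hU₁.union hU₂))).toNNReal
          ≤ (ψ (indCM U₁ hU₁)).toNNReal + (ψ (indCM U₂ hU₂)).toNNReal := by
        rw [← Real.toNNReal_add (psi_ind_nonneg ψ hψ U₁ hU₁) (psi_ind_nonneg ψ hψ U₂ hU₂)]
        exact Real.toNNReal_mono (psi_ind_union_le ψ hψ U₁ U₂ hU₁ hU₂)
      refine h1.trans ?_
      calc (ψ (indCM U₁ hU₁)).toNNReal + (ψ (indCM U₂ hU₂)).toNNReal
          ≤ (sInf (contSet ψ K₁) + ε/2) + (sInf (contSet ψ K₂) + ε/2) :=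
            add_le_add ha.le hb.le
        _ = sInf (contSet ψ K₁) + sInf (contSet ψ K₂) + ε := by rw [add_add_add_comm, add_halves]
    · -- ≥
      refine le_csInf (contSet_nonempty ψ _) ?_
      rintro r ⟨U, hU, hKU, rfl⟩
      obtain ⟨W, hW, hK₁W, hWd⟩ := exists_clopen_sep K₁.isCompact K₂.isCompact.isClosed hd
      have hsub1 : (K₁ : Set Z) ⊆ U ∩ W :=
        subset_inter ((subset_union_left.trans hKU)) hK₁W
      have hsub2 : (K₂ : Set Z) ⊆ U \ W := by
        refine subset_diff.2 ⟨(subset_union_right.trans hKU), ?_⟩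
        exact (disjoint_left.2 fun x hx2 hxW => disjoint_left.1 hWd hxW hx2)
      have h1 : sInf (contSet ψ K₁) ≤ (ψ (indCM (U ∩ W) (hU.inter hW))).toNNReal :=
        csInf_le (OrderBot.bddBelow _) ⟨U ∩ W, hU.inter hW, hsub1, rfl⟩
      have h2 : sInf (contSet ψ K₂) ≤ (ψ (indCM (U \ W) (hU.diff hW))).toNNReal :=
        csInf_le (OrderBot.bddBelow _) ⟨U \ W, hU.diff hW, hsub2, rfl⟩
      refine (add_le_add h1 h2).trans ?_
      rw [← Real.toNNReal_add (psi_ind_nonneg ψ hψ _ _) (psi_ind_nonneg ψ hψ _ _),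
        psi_ind_add ψ U W hU hW]

lemma rContent_clopen (hψ : ∀ f : C(Z, ℤ), (∀ z, 0 ≤ f z) → 0 ≤ ψ f)
    (U : Set Z) (hU : IsClopen U) :
    rContent ψ hψ ⟨U, hU.isClosed.isCompact⟩ = ENNReal.ofReal (ψ (indCM U hU)) := by
  change ((rContent ψ hψ).toFun _ : ℝ≥0∞) = _
  rw [ENNReal.ofReal, ENNReal.coe_inj]
  show sInf (contSet ψ U) = _
  refine le_antisymm (csInf_le (OrderBot.bddBelow _) ⟨U, hU, subset_rfl, rfl⟩) ?_
  refine le_csInf (contSet_nonempty ψ _) ?_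
  rintro r ⟨V, hV, hUV, rfl⟩
  exact Real.toNNReal_mono (psi_ind_mono ψ hψ hU hV hUV)

end Top

section Meas
variable {Z : Type*} [TopologicalSpace Z] [CompactSpace Z] [T2Space Z]
  [TotallyDisconnectedSpace Z] [MeasurableSpace Z] [BorelSpace Z]
  (ψ : C(Z, ℤ) →+ ℝ)

/-- The measure associated to a positive functional. -/
noncomputable def rMeasure (hψ : ∀ f : C(Z, ℤ), (∀ z, 0 ≤ f z) → 0 ≤ ψ f) : Measure Z :=
  (rContent ψ hψ).measure

lemma rMeasure_clopen (hψ : ∀ f : C(Z, ℤ), (∀ z, 0 ≤ f z) → 0 ≤ ψ f)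
    (U : Set Z) (hU : IsClopen U) :
    rMeasure ψ hψ U = ENNReal.ofReal (ψ (indCM U hU)) := by
  rw [rMeasure, Content.measure_apply _ hU.2.measurableSet]
  have h1 : (rContent ψ hψ).outerMeasure U = (rContent ψ hψ).innerContent ⟨U, hU.2⟩ :=
    Content.outerMeasure_opens _ ⟨U, hU.2⟩
  rw [h1, Content.innerContent_of_isCompact _ hU.1.isCompact hU.2]
  exact rContent_clopen ψ hψ U hU

lemma rMeasure_finite (hψ : ∀ f : C(Z, ℤ), (∀ z, 0 ≤ f z) → 0 ≤ ψ f) :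
    IsFiniteMeasure (rMeasure ψ hψ) := by
  constructor
  rw [rMeasure_clopen ψ hψ univ isClopen_univ]
  exact ENNReal.ofReal_lt_top

lemma continuous_cast (f : C(Z, ℤ)) : Continuous fun z => ((f z : ℤ) : ℝ) :=
  Continuous.comp continuous_of_discreteTopology f.continuous

lemma integrable_cast (μ : Measure Z) [IsFiniteMeasure μ] (f : C(Z, ℤ)) :
    Integrable (fun z => ((f z : ℤ) : ℝ)) μ :=
  (continuous_cast f).integrable_of_hasCompactSupport
    (IsCompact.of_isClosed_subset isCompact_univ (isClosed_tsupport _) (subset_univ _))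

/-- Integration against a finite measure, as an additive map on `C(Z, ℤ)`. -/
noncomputable def intHom (μ : Measure Z) [IsFiniteMeasure μ] : C(Z, ℤ) →+ ℝ where
  toFun f := ∫ z, ((f z : ℤ) : ℝ) ∂μ
  map_zero' := by simp
  map_add' f g := by
    have : (fun z => (((f + g) z : ℤ) : ℝ)) = fun z => ((f z : ℤ) : ℝ) + ((g z : ℤ) : ℝ) := by
      funext z; push_cast [ContinuousMap.add_apply]; ring
    simp only [this]
    exact integral_add (integrable_cast μ f) (integrable_cast μ g)

lemma intHom_apply (μ : Measure Z) [IsFiniteMeasure μ] (f : C(Z, ℤ)) :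
    intHom μ f = ∫ z, ((f z : ℤ) : ℝ) ∂μ := rfl

lemma intHom_ind (μ : Measure Z) [IsFiniteMeasure μ] (U : Set Z) (hU : IsClopen U) :
    intHom μ (indCM U hU) = (μ U).toReal := by
  rw [intHom_apply]
  have h : (fun z => ((indCM U hU z : ℤ) : ℝ)) = U.indicator (fun _ => (1:ℝ)) := by
    funext z; by_cases h : z ∈ U <;> simp [h]
  rw [h, integral_indicator_const (1:ℝ) hU.2.measurableSet, smul_eq_mul, mul_one]
  rfl

lemma intHom_nonneg (μ : Measure Z) [IsFiniteMeasure μ] (f : C(Z, ℤ)) (h : ∀ z, 0 ≤ f z) :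
    0 ≤ intHom μ f :=
  integral_nonneg fun z => by simp only [Pi.zero_apply]; exact_mod_cast h z

lemma integral_rMeasure (hψ : ∀ f : C(Z, ℤ), (∀ z, 0 ≤ f z) → 0 ≤ ψ f) (f : C(Z, ℤ)) :
    haveI := rMeasure_finite ψ hψ
    intHom (rMeasure ψ hψ) f = ψ f := by
  haveI := rMeasure_finite ψ hψ
  have h := hom_ext (intHom (rMeasure ψ hψ)) ψ (fun U hU => by
    rw [intHom_ind, rMeasure_clopen ψ hψ U hU,
      ENNReal.toReal_ofReal (psi_ind_nonneg ψ hψ U hU)])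
  rw [h]

lemma measure_ext_clopen [SecondCountableTopology Z] (μ ν : Measure Z)
    [IsFiniteMeasure μ] [IsFiniteMeasure ν]
    (h : ∀ U : Set Z, IsClopen U → μ U = ν U) : μ = ν := by
  have hgen : (inferInstance : MeasurableSpace Z)
      = MeasurableSpace.generateFrom {U : Set Z | IsClopen U} := by
    refine le_antisymm ?_ (MeasurableSpace.generateFrom_le fun U hU => hU.2.measurableSet)
    rw [BorelSpace.measurable_eq (α := Z)]
    refine MeasurableSpace.generateFrom_le fun s hs => ?_
    have hs' : IsOpen s := hs
    have hcov : s = ⋃ i : {V : Set Z // IsClopen V ∧ V ⊆ s}, i.1 := by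
      apply Subset.antisymm
      · intro x hx
        obtain ⟨V, hV, hxV, hVs⟩ := compact_exists_isClopen_in_isOpen hs' hx
        exact mem_iUnion.2 ⟨⟨V, hV, hVs⟩, hxV⟩
      · exact iUnion_subset fun i => i.2.2
    obtain ⟨T, hTc, hTU⟩ := TopologicalSpace.isOpen_iUnion_countable
      (fun i : {V : Set Z // IsClopen V ∧ V ⊆ s} => i.1) (fun i => i.2.1.2)
    have hs2 : s = ⋃ i ∈ T, i.1 := by rw [hTU, ← hcov]
    rw [hs2]
    exact MeasurableSet.biUnion hTc
      (fun i _ => MeasurableSpace.measurableSet_generateFrom i.2.1)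
  exact MeasureTheory.ext_of_generate_finite _ hgen
    (fun s hs t ht _ => hs.inter ht) (fun U hU => h U hU) (h univ isClopen_univ)

end Meas

section Grp
variable {Γ Z : Type*} [Group Γ] [TopologicalSpace Z] [CompactSpace Z] [T2Space Z]
  [TotallyDisconnectedSpace Z] [MeasurableSpace Z] [BorelSpace Z]
  [MulAction Γ Z] [ContinuousConstSMul Γ Z]

lemma image_smul_eq_preimage (γ : Γ) (A : Set Z) :
    (γ • ·) '' A = (fun z => γ⁻¹ • z) ⁻¹' A := by
  ext z
  constructor
  · rintro ⟨a, ha, rfl⟩; simpa [inv_smul_smul] using ha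
  · intro hz; exact ⟨γ⁻¹ • z, hz, smul_inv_smul γ z⟩

lemma map_inv_smul_eq (μ : Measure Z)
    (hinv : ∀ (γ : Γ) (A : Set Z), MeasurableSet A → μ ((γ • ·) '' A) = μ A) (γ : Γ) :
    Measure.map (fun z => γ⁻¹ • z) μ = μ := by
  ext A hA
  rw [Measure.map_apply (continuous_const_smul γ⁻¹).measurable hA,
    ← image_smul_eq_preimage γ A, hinv γ A hA]

lemma intHom_comp (μ : Measure Z) [IsFiniteMeasure μ]
    (hinv : ∀ (γ : Γ) (A : Set Z), MeasurableSet A → μ ((γ • ·) '' A) = μ A)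
    (f : C(Z, ℤ)) (γ : Γ) :
    intHom μ (f.comp ⟨fun z => γ⁻¹ • z, continuous_const_smul γ⁻¹⟩) = intHom μ f := by
  rw [intHom_apply, intHom_apply]
  calc ∫ z, ((f (γ⁻¹ • z) : ℤ) : ℝ) ∂μ
      = ∫ z, ((f z : ℤ) : ℝ) ∂(Measure.map (fun z => γ⁻¹ • z) μ) := by
        rw [integral_map ((continuous_const_smul γ⁻¹).measurable.aemeasurable)
          ((continuous_cast f).aestronglyMeasurable)]
    _ = ∫ z, ((f z : ℤ) : ℝ) ∂μ := by rw [map_inv_smul_eq μ hinv γ]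

/-- The positive functional on the coinvariants attached to an invariant measure. -/
noncomputable def toFunc (μ : Measure Z) [IsFiniteMeasure μ]
    (hinv : ∀ (γ : Γ) (A : Set Z), MeasurableSet A → μ ((γ • ·) '' A) = μ A) :
    C(Z, ℤ) ⧸ coinvariantsSubgroup Γ Z →+ ℝ :=
  QuotientAddGroup.lift _ (intHom μ) (by
    have hle : coinvariantsSubgroup Γ Z ≤ (intHom μ).ker := by
      refine (AddSubgroup.closure_le _).2 ?_
      rintro g ⟨f, γ, rfl⟩
      rw [SetLike.mem_coe, AddMonoidHom.mem_ker, map_sub, intHom_comp μ hinv f γ, sub_self]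
    exact fun g hg => hle hg)

lemma toFunc_mk (μ : Measure Z) [IsFiniteMeasure μ]
    (hinv : ∀ (γ : Γ) (A : Set Z), MeasurableSet A → μ ((γ • ·) '' A) = μ A) (f : C(Z, ℤ)) :
    toFunc μ hinv (QuotientAddGroup.mk f) = intHom μ f := rfl

-- backward direction
variable (φ : C(Z, ℤ) ⧸ coinvariantsSubgroup Γ Z →+ ℝ)

lemma psi_comp_eq (f : C(Z, ℤ)) (γ : Γ) :
    (φ.comp (QuotientAddGroup.mk' (coinvariantsSubgroup Γ Z)))
      (f.comp ⟨fun z => γ⁻¹ • z, continuous_const_smul γ⁻¹⟩)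
    = (φ.comp (QuotientAddGroup.mk' (coinvariantsSubgroup Γ Z))) f := by
  have hmem : f - f.comp ⟨fun z => γ⁻¹ • z, continuous_const_smul γ⁻¹⟩
      ∈ coinvariantsSubgroup Γ Z :=
    AddSubgroup.subset_closure ⟨f, γ, rfl⟩
  have h0 : (φ.comp (QuotientAddGroup.mk' (coinvariantsSubgroup Γ Z)))
      (f - f.comp ⟨fun z => γ⁻¹ • z, continuous_const_smul γ⁻¹⟩) = 0 := by
    rw [AddMonoidHom.comp_apply, QuotientAddGroup.mk'_apply, (QuotientAddGroup.eq_zero_iff _).2 hmem, map_zero]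
  rw [map_sub] at h0
  linarith

lemma rMeasure_smul_clopen
    (hψ : ∀ f : C(Z, ℤ), (∀ z, 0 ≤ f z) →
      0 ≤ (φ.comp (QuotientAddGroup.mk' (coinvariantsSubgroup Γ Z))) f)
    (γ : Γ) (U : Set Z) (hU : IsClopen U) :
    rMeasure _ hψ ((fun z => γ⁻¹ • z) ⁻¹' U) = rMeasure _ hψ U := by
  have hpre : IsClopen ((fun z => γ⁻¹ • z) ⁻¹' U) := hU.preimage (continuous_const_smul γ⁻¹)
  rw [rMeasure_clopen _ hψ _ hpre, rMeasure_clopen _ hψ U hU]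
  congr 1
  have hind : indCM ((fun z => γ⁻¹ • z) ⁻¹' U) hpre
      = (indCM U hU).comp ⟨fun z => γ⁻¹ • z, continuous_const_smul γ⁻¹⟩ := by
    ext z; simp [Set.mem_preimage]
  rw [hind, psi_comp_eq φ]

end Grp

end Stmt1Aux

open Stmt1Aux

/-- For a compact totally disconnected metric space `Z` with an action of a
group `Γ` by homeomorphisms, the `Γ`-invariant finite Borel measures on `Z` correspond
bijectively to positive `ℤ`-linear homomorphisms from the coinvariants `C(Z,ℤ)_Γ` to `ℝ`,
the correspondence being induced by integration. -/
theorem stmt1 (Γ Z : Type*) [Group Γ] [MetricSpace Z] [CompactSpace Z]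
    [TotallyDisconnectedSpace Z] [MeasurableSpace Z] [BorelSpace Z]
    [MulAction Γ Z] [ContinuousConstSMul Γ Z] :
    ∃ e : {μ : Measure Z // IsFiniteMeasure μ ∧
            ∀ (γ : Γ) (A : Set Z), MeasurableSet A → μ ((γ • ·) '' A) = μ A} ≃
        {φ : C(Z, ℤ) ⧸ coinvariantsSubgroup Γ Z →+ ℝ //
            ∀ f : C(Z, ℤ), (∀ z, 0 ≤ f z) → 0 ≤ φ (QuotientAddGroup.mk f)},
      ∀ (μ : {μ : Measure Z // IsFiniteMeasure μ ∧
            ∀ (γ : Γ) (A : Set Z), MeasurableSet A → μ ((γ • ·) '' A) = μ A})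
        (f : C(Z, ℤ)),
        (e μ : C(Z, ℤ) ⧸ coinvariantsSubgroup Γ Z →+ ℝ) (QuotientAddGroup.mk f)
          = ∫ z, (f z : ℝ) ∂μ.1 := by
  classical
  refine ⟨⟨?_, ?_, ?_, ?_⟩, ?_⟩
  · -- toFun
    rintro ⟨μ, hfin, hinv⟩
    haveI := hfin
    exact ⟨toFunc μ hinv, fun f hf => by
      rw [toFunc_mk μ hinv f]
      exact intHom_nonneg μ f hf⟩
  · -- invFun
    rintro ⟨φ, hpos⟩
    refine ⟨rMeasure (φ.comp (QuotientAddGroup.mk' (coinvariantsSubgroup Γ Z)))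
      (fun f hf => hpos f hf), rMeasure_finite _ _, ?_⟩
    set ψ := φ.comp (QuotientAddGroup.mk' (coinvariantsSubgroup Γ Z)) with hψdef
    set hψ : ∀ f : C(Z, ℤ), (∀ z, 0 ≤ f z) → 0 ≤ ψ f := fun f hf => hpos f hf with hψh
    intro γ A hA
    haveI := rMeasure_finite ψ hψ
    have hmap : Measure.map (fun z => γ⁻¹ • z) (rMeasure ψ hψ) = rMeasure ψ hψ := by
      haveI : IsFiniteMeasure (Measure.map (fun z => γ⁻¹ • z) (rMeasure ψ hψ)) := by
        constructor
        rw [Measure.map_apply (continuous_const_smul γ⁻¹).measurable MeasurableSet.univ,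
          Set.preimage_univ]
        exact measure_lt_top _ _
      refine measure_ext_clopen _ _ fun U hU => ?_
      rw [Measure.map_apply (continuous_const_smul γ⁻¹).measurable hU.2.measurableSet]
      exact rMeasure_smul_clopen φ hψ γ U hU
    rw [image_smul_eq_preimage γ A,
      ← Measure.map_apply (continuous_const_smul γ⁻¹).measurable hA, hmap]
  · -- left_inv
    rintro ⟨μ, hfin, hinv⟩
    haveI := hfin
    refine Subtype.ext ?_
    simp only
    set ψ := (toFunc μ hinv).comp (QuotientAddGroup.mk' (coinvariantsSubgroup Γ Z)) with hψdef
    set hψ : ∀ f : C(Z, ℤ), (∀ z, 0 ≤ f z) → 0 ≤ ψ f := fun f hf => by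
      rw [hψdef]
      exact intHom_nonneg μ f hf
    haveI := rMeasure_finite ψ hψ
    refine measure_ext_clopen _ _ fun U hU => ?_
    rw [rMeasure_clopen ψ hψ U hU]
    have h1 : ψ (indCM U hU) = (μ U).toReal := by
      show toFunc μ hinv (QuotientAddGroup.mk (indCM U hU)) = _
      rw [toFunc_mk, intHom_ind]
    rw [h1, ENNReal.ofReal_toReal (measure_ne_top μ U)]
  · -- right_inv
    rintro ⟨φ, hpos⟩
    refine Subtype.ext ?_
    simp only
    set ψ := φ.comp (QuotientAddGroup.mk' (coinvariantsSubgroup Γ Z)) with hψdef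
    set hψ : ∀ f : C(Z, ℤ), (∀ z, 0 ≤ f z) → 0 ≤ ψ f := fun f hf => hpos f hf
    haveI := rMeasure_finite ψ hψ
    refine AddMonoidHom.ext fun q => ?_
    refine QuotientAddGroup.induction_on q fun f => ?_
    have h1 := integral_rMeasure ψ hψ f
    calc _ = intHom (rMeasure ψ hψ) f := rfl
      _ = ψ f := h1
      _ = φ (QuotientAddGroup.mk f) := rfl
  · -- the integral formula
    rintro ⟨μ, hfin, hinv⟩ f
    haveI := hfin
    exact toFunc_mk μ hinv f
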